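/- If G is a connected graph of order n ≥ 3 and diameter d, and W is an m-resolving set of G with |W| = k, then C(k+d−1, d−1) + k ≥ n. Hence md(G) ≥ f(n,d), where f(n,d) is the least k with C(k+d−1,d−1)+k ≥ n. -/

import Mathlib

open SimpleGraph

/-- The multiset of distances from `v` to the vertices of `W`. -/
noncomputable def mrep {V : Type*} (G : SimpleGraph V) (W : Finset V) (v : V) : Multiset ℕ :=
  W.val.map (fun w => G.dist v w)

/-- `W` is an m-resolving set of `G`: distinct vertices have distinct
representation multisets. -/
def IsMResolving {V : Type*} (G : SimpleGraph V) (W : Finset V) : Prop :=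
  ∀ u v : V, u ≠ v → mrep G W u ≠ mrep G W v

/-- The multiset dimension of `G`, equal to `⊤` if `G` has no m-resolving set. -/
noncomputable def mdim {V : Type*} (G : SimpleGraph V) : ℕ∞ :=
  ⨅ W : {W : Finset V // IsMResolving G W}, (W.1.card : ℕ∞)

theorem stmt_5 {V : Type*} [Fintype V] (G : SimpleGraph V) (hG : G.Connected)
    (hn : 3 ≤ Fintype.card V) :
    (∀ W : Finset V, IsMResolving G W →
        Fintype.card V ≤ (W.card + G.diam - 1).choose (G.diam - 1) + W.card) ∧
      ((sInf {k : ℕ | Fintype.card V ≤ (k + G.diam - 1).choose (G.diam - 1) + k} : ℕ) : ℕ∞)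
        ≤ mdim G := by
  have hne : Nonempty V := Fintype.card_pos_iff.mp (by omega)
  have hnontriv : Nontrivial V := Fintype.one_lt_card_iff_nontrivial.mp (by omega)
  have hedtop : G.ediam ≠ ⊤ := by
    obtain ⟨u, v, huv⟩ := G.exists_edist_eq_ediam_of_finite
    rw [← huv]
    exact edist_ne_top_iff_reachable.mpr (hG u v)
  set d := G.diam with hd
  have hd1 : 1 ≤ d := by
    obtain ⟨u, v, huv⟩ := exists_pair_ne V
    have h1 := G.dist_le_diam hedtop (u := u) (v := v)
    have h2 := hG.pos_dist_of_ne huv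
    omega
  have main : ∀ W : Finset V, IsMResolving G W →
      Fintype.card V ≤ (W.card + d - 1).choose (d - 1) + W.card := by
    intro W hW
    classical
    set k := W.card with hk
    -- bound entries of mrep for vertices outside W
    have hbound : ∀ v : V, v ∉ W → ∀ x ∈ mrep G W v, 1 ≤ x ∧ x ≤ d := by
      intro v hv x hx
      simp only [mrep, Multiset.mem_map, Finset.mem_val] at hx
      obtain ⟨w, hw, rfl⟩ := hx
      have hvw : v ≠ w := fun h => hv (h ▸ hw)
      exact ⟨hG.pos_dist_of_ne hvw, G.dist_le_diam hedtop⟩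
    let g : ℕ → Fin d := fun x => ⟨min (x - 1) (d - 1), by omega⟩
    let F : (Wᶜ : Finset V) → Sym (Fin d) k := fun v =>
      ⟨(mrep G W v.1).map g, by simp [mrep, Multiset.card_map, hk]⟩
    have hrec : ∀ v : V, v ∉ W →
        ((mrep G W v).map g).map (fun i : Fin d => (i : ℕ) + 1) = mrep G W v := by
      intro v hv
      rw [Multiset.map_map]
      have := Multiset.map_congr (f := (fun i : Fin d => (i : ℕ) + 1) ∘ g) (g := id) rfl
        (fun x hx => by
          have h := hbound v hv x hx
          simp only [Function.comp, g, id]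
          omega)
      rw [this, Multiset.map_id]
    have hFinj : Function.Injective F := by
      intro u v huv
      by_contra hne'
      have hmem_u : u.1 ∉ W := Finset.mem_compl.mp u.2
      have hmem_v : v.1 ∉ W := Finset.mem_compl.mp v.2
      have hmaps : (mrep G W u.1).map g = (mrep G W v.1).map g :=
        congrArg Subtype.val huv
      have : mrep G W u.1 = mrep G W v.1 := by
        rw [← hrec u.1 hmem_u, ← hrec v.1 hmem_v, hmaps]
      exact hW u.1 v.1 (fun h => hne' (Subtype.ext h)) this
    have hcard : (Wᶜ : Finset V).card ≤ Fintype.card (Sym (Fin d) k) := by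
      rw [← Fintype.card_coe]
      exact Fintype.card_le_of_injective F hFinj
    have hsym : Fintype.card (Sym (Fin d) k) = (d + k - 1).choose k := by
      rw [Sym.card_sym_eq_choose, Fintype.card_fin]
    have hchoose : (k + d - 1).choose (d - 1) = (d + k - 1).choose k := by
      have h1 : (d - 1) ≤ k + d - 1 := by omega
      have h2 : (k + d - 1) - (d - 1) = k := by omega
      have := Nat.choose_symm h1
      rw [h2] at this
      rw [← this]
      congr 1
      omega
    have hcompl : (Wᶜ : Finset V).card + k = Fintype.card V := by
      rw [hk]; exact Finset.card_compl_add_card W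
    omega
  refine ⟨main, ?_⟩
  rw [mdim]
  apply le_iInf
  rintro ⟨W, hW⟩
  exact Nat.cast_le.mpr (Nat.sInf_le (main W hW))
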